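/- The function f(x) = x(e^{λ(W/x + C)} − 1), for real x > 0, is convex in x and admits a unique minimizer x* > 0, characterized by the equation e^{λ(W/x* + C)}(1 − λW/x*) = 1. -/

import Mathlib

open Set Filter

section aux

variable (l W C : ℝ)

private noncomputable def fAux : ℝ → ℝ := fun x => x * (Real.exp (l * (W / x + C)) - 1)

private noncomputable def phiAux : ℝ → ℝ :=
  fun x => Real.exp (l * (W / x + C)) * (1 - l * W / x) - 1

private lemma hasDerivAt_fAux {x : ℝ} (hx : x ≠ 0) :
    HasDerivAt (fAux l W C) (phiAux l W C x) x := by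
  have h1 : HasDerivAt (fun x : ℝ => W / x) (W * (-(x ^ 2)⁻¹)) x := by
    simpa [div_eq_mul_inv] using (hasDerivAt_inv hx).const_mul W
  have h2 : HasDerivAt (fun x : ℝ => l * (W / x + C)) (l * (W * (-(x ^ 2)⁻¹))) x :=
    (h1.add_const C).const_mul l
  have h3 := h2.exp
  have h4 := (hasDerivAt_id x).mul (h3.sub_const 1)
  refine h4.congr_deriv ?_
  unfold phiAux
  simp only [id]
  field_simp
  ring

private lemma contAt_phiAux {x : ℝ} (hx : x ≠ 0) : ContinuousAt (phiAux l W C) x := by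
  have h1 : ContinuousAt (fun x : ℝ => W / x) x :=
    continuousAt_const.div continuousAt_id hx
  have h2 : ContinuousAt (fun x : ℝ => l * W / x) x :=
    continuousAt_const.div continuousAt_id hx
  exact ((Real.continuous_exp.continuousAt.comp
    ((h1.add continuousAt_const).const_mul l)).mul
    (continuousAt_const.sub h2)).sub continuousAt_const

private lemma contOn_fAux : ContinuousOn (fAux l W C) (Ioi 0) := by
  intro x hx
  have hx' : (x : ℝ) ≠ 0 := ne_of_gt hx
  exact ((hasDerivAt_fAux l W C hx').continuousAt).continuousWithinAt

/-- h(t) = e^t (1 - t) is strictly decreasing on [0, ∞). -/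
private lemma strictAntiOn_h : StrictAntiOn (fun t : ℝ => Real.exp t * (1 - t)) (Ici 0) := by
  apply strictAntiOn_of_deriv_neg (convex_Ici 0)
  · exact (Real.continuous_exp.mul (continuous_const.sub continuous_id)).continuousOn
  · intro t ht
    rw [interior_Ici] at ht
    have hd : HasDerivAt (fun t : ℝ => Real.exp t * (1 - t)) (-(t * Real.exp t)) t := by
      have := (Real.hasDerivAt_exp t).mul ((hasDerivAt_id t).const_sub 1)
      refine this.congr_deriv ?_
      simp only [id]
      ring
    rw [hd.deriv]
    have : 0 < t * Real.exp t := mul_pos ht (Real.exp_pos t)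
    linarith

private lemma strictMonoOn_phiAux (hl : 0 < l) (hW : 0 < W) :
    StrictMonoOn (phiAux l W C) (Ioi 0) := by
  intro a ha b hb hab
  have ha' : (0:ℝ) < a := ha
  have hb' : (0:ℝ) < b := hb
  have hta : 0 < l * W / a := div_pos (mul_pos hl hW) ha'
  have htb : 0 < l * W / b := div_pos (mul_pos hl hW) hb'
  have htba : l * W / b < l * W / a := by
    apply div_lt_div_of_pos_left (mul_pos hl hW) ha' hab
  have hh := strictAntiOn_h (le_of_lt htb) (le_of_lt hta) htba
  unfold phiAux
  have hrw : ∀ x : ℝ, x ≠ 0 →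
      Real.exp (l * (W / x + C)) * (1 - l * W / x)
        = Real.exp (l * C) * (Real.exp (l * W / x) * (1 - l * W / x)) := by
    intro x hx
    rw [show l * (W / x + C) = l * W / x + l * C by field_simp, Real.exp_add]
    ring
  rw [hrw a (ne_of_gt ha'), hrw b (ne_of_gt hb')]
  have := mul_lt_mul_of_pos_left hh (Real.exp_pos (l * C))
  linarith

private lemma strictConvexOn_fAux (hl : 0 < l) (hW : 0 < W) :
    StrictConvexOn ℝ (Ioi 0) (fAux l W C) := by
  apply StrictMonoOn.strictConvexOn_of_deriv (convex_Ioi 0) (contOn_fAux l W C)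
  rw [interior_Ioi]
  intro a ha b hb hab
  rw [(hasDerivAt_fAux l W C (ne_of_gt (mem_Ioi.mp ha))).deriv,
    (hasDerivAt_fAux l W C (ne_of_gt (mem_Ioi.mp hb))).deriv]
  exact strictMonoOn_phiAux l W C hl hW ha hb hab

/-- Characterization of the minimum. -/
private lemma isMinOn_iff_phi_zero (hl : 0 < l) (hW : 0 < W) {x : ℝ} (hx : 0 < x) :
    IsMinOn (fAux l W C) (Ioi 0) x ↔ phiAux l W C x = 0 := by
  constructor
  · intro hmin
    exact (hmin.isLocalMin (Ioi_mem_nhds hx)).hasDerivAt_eq_zero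
      (hasDerivAt_fAux l W C (ne_of_gt hx))
  · intro hphi
    intro y hy
    have hy' : (0:ℝ) < y := hy
    rcases lt_trichotomy x y with h | h | h
    · -- x < y : MVT on [x, y]
      obtain ⟨c, hc, hceq⟩ := exists_hasDerivAt_eq_slope (fAux l W C) (phiAux l W C) h
        ((contOn_fAux l W C).mono (fun z hz => lt_of_lt_of_le hx hz.1))
        (fun z hz => hasDerivAt_fAux l W C (ne_of_gt (lt_trans hx hz.1)))
      have hc0 : 0 < c := lt_trans hx hc.1
      have hphic : 0 < phiAux l W C c := by
        have := strictMonoOn_phiAux l W C hl hW hx hc0 hc.1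
        rw [hphi] at this; exact this
      rw [hceq] at hphic
      have hyx : 0 < y - x := by linarith
      have := (div_pos_iff.mp hphic)
      rcases this with ⟨hnum, _⟩ | ⟨_, hden⟩
      · simp only [mem_setOf_eq]; linarith
      · linarith
    · simp [h]
    · -- y < x : MVT on [y, x]
      obtain ⟨c, hc, hceq⟩ := exists_hasDerivAt_eq_slope (fAux l W C) (phiAux l W C) h
        ((contOn_fAux l W C).mono (fun z hz => lt_of_lt_of_le hy' hz.1))
        (fun z hz => hasDerivAt_fAux l W C (ne_of_gt (lt_trans hy' hz.1)))
      have hc0 : 0 < c := lt_trans hy' hc.1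
      have hphic : phiAux l W C c < 0 := by
        have := strictMonoOn_phiAux l W C hl hW hc0 hx hc.2
        rw [hphi] at this; exact this
      rw [hceq] at hphic
      have hxy : 0 < x - y := by linarith
      have := div_neg_iff.mp hphic
      rcases this with ⟨_, hden⟩ | ⟨hnum, _⟩
      · linarith
      · simp only [mem_setOf_eq]; linarith

private lemma exists_root (hl : 0 < l) (hW : 0 < W) (hC : 0 < C) :
    ∃ x : ℝ, 0 < x ∧ phiAux l W C x = 0 := by
  have hlW : 0 < l * W := mul_pos hl hW
  -- φ(lW) = -1 < 0
  have hneg : phiAux l W C (l * W) = -1 := by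
    unfold phiAux
    rw [div_self (ne_of_gt hlW)]
    ring
  -- φ tends to exp(lC) - 1 > 0 at infinity
  have htend : Tendsto (phiAux l W C) atTop (nhds (Real.exp (l * C) - 1)) := by
    have h1 : Tendsto (fun x : ℝ => W / x) atTop (nhds 0) := by
      simpa [div_eq_mul_inv] using tendsto_inv_atTop_zero.const_mul W
    have h2 : Tendsto (fun x : ℝ => l * W / x) atTop (nhds 0) := by
      simpa [div_eq_mul_inv] using tendsto_inv_atTop_zero.const_mul (l * W)
    have h3 : Tendsto (fun x : ℝ => Real.exp (l * (W / x + C))) atTop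
        (nhds (Real.exp (l * C))) := by
      have : Tendsto (fun x : ℝ => l * (W / x + C)) atTop (nhds (l * C)) := by
        have := (h1.add_const C).const_mul l
        simpa using this
      exact (Real.continuous_exp.continuousAt.tendsto).comp this
    have := (h3.mul ((tendsto_const_nhds (x := (1:ℝ))).sub h2)).sub_const 1
    unfold phiAux
    simpa using this
  have hpos : ∀ᶠ x in atTop, 0 < phiAux l W C x := by
    have : 0 < Real.exp (l * C) - 1 := by
      have := Real.one_lt_exp_iff.mpr (mul_pos hl hC)
      linarith
    exact htend.eventually (eventually_gt_nhds this)
  obtain ⟨b, hb1, hb2⟩ := ((hpos.and (eventually_gt_atTop (l * W))).exists)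
  have hlWb : l * W ≤ b := le_of_lt hb2
  have hcont : ContinuousOn (phiAux l W C) (Icc (l * W) b) := by
    intro z hz
    exact (contAt_phiAux l W C (ne_of_gt (lt_of_lt_of_le hlW hz.1))).continuousWithinAt
  have hmem : (0:ℝ) ∈ Icc (phiAux l W C (l * W)) (phiAux l W C b) := by
    constructor
    · rw [hneg]; linarith
    · exact le_of_lt hb1
  obtain ⟨x, hx, hxeq⟩ := intermediate_value_Icc hlWb hcont hmem
  exact ⟨x, lt_of_lt_of_le hlW hx.1, hxeq⟩

end aux

/-- f(x) = x(e^{λ(W/x + C)} − 1) is convex on (0,∞) and admits a unique minimizer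
x* > 0, characterized by e^{λ(W/x* + C)}(1 − λW/x*) = 1. -/
theorem convex_unique_minimizer (l W C : ℝ) (hl : 0 < l) (hW : 0 < W) (hC : 0 < C) :
    ConvexOn ℝ (Ioi 0) (fun x : ℝ => x * (Real.exp (l * (W / x + C)) - 1)) ∧
    (∃! x : ℝ, 0 < x ∧
      IsMinOn (fun x : ℝ => x * (Real.exp (l * (W / x + C)) - 1)) (Ioi 0) x) ∧
    (∀ x : ℝ, 0 < x →
      (IsMinOn (fun x : ℝ => x * (Real.exp (l * (W / x + C)) - 1)) (Ioi 0) x ↔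
        Real.exp (l * (W / x + C)) * (1 - l * W / x) = 1)) := by
  have hfeq : (fun x : ℝ => x * (Real.exp (l * (W / x + C)) - 1)) = fAux l W C := rfl
  have hchar : ∀ x : ℝ, 0 < x →
      (IsMinOn (fAux l W C) (Ioi 0) x ↔
        Real.exp (l * (W / x + C)) * (1 - l * W / x) = 1) := by
    intro x hx
    rw [isMinOn_iff_phi_zero l W C hl hW hx]
    unfold phiAux
    constructor <;> intro h <;> linarith
  refine ⟨?_, ?_, ?_⟩
  · rw [hfeq]
    exact (strictConvexOn_fAux l W C hl hW).convexOn
  · obtain ⟨x0, hx0, hx0eq⟩ := exists_root l W C hl hW hC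
    refine ⟨x0, ⟨hx0, ?_⟩, ?_⟩
    · rw [hfeq]
      exact (isMinOn_iff_phi_zero l W C hl hW hx0).mpr hx0eq
    · rintro y ⟨hy, hymin⟩
      rw [hfeq] at hymin
      have hyeq : phiAux l W C y = 0 := (isMinOn_iff_phi_zero l W C hl hW hy).mp hymin
      exact (strictMonoOn_phiAux l W C hl hW).injOn hy hx0 (by rw [hyeq, hx0eq])
  · intro x hx
    rw [hfeq]
    exact hchar x hx
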